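/- Let R′ be an n⁴ complex array which is of real type II with respect to an involution σ of {1,…,n}, or of antireal type II with respect to σ. Then the braided covector algebra V̌(R′,R) admits a (necessarily unique) star structure * satisfying x_i* = x_{σ(i)} for all i = 1,…,n. -/

import Mathlib

open scoped ComplexConjugate

noncomputable section

/-- An n⁴ array `R^i{}_j{}^k{}_l` viewed as an n²×n² matrix with row index `(i,k)`,
column index `(j,l)`. -/
def toMat (n : ℕ) (R : Fin n → Fin n → Fin n → Fin n → ℂ) :
    Matrix (Fin n × Fin n) (Fin n × Fin n) ℂ :=
  Matrix.of fun p q => R p.1 q.1 p.2 q.2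

/-- Entries `(R⁻¹)^i{}_j{}^k{}_l` of the matrix inverse of `R`. -/
def invEntry (n : ℕ) (R : Fin n → Fin n → Fin n → Fin n → ℂ)
    (i j k l : Fin n) : ℂ :=
  (toMat n R)⁻¹ (i, k) (j, l)

/-- `R` is of real type I: `conj (R^i{}_j{}^k{}_l) = R^l{}_k{}^j{}_i`. -/
def RealTypeI (n : ℕ) (R : Fin n → Fin n → Fin n → Fin n → ℂ) : Prop :=
  ∀ i j k l, conj (R i j k l) = R l k j i

/-- `R` is of antireal type I: `R` invertible and
`conj (R^i{}_j{}^k{}_l) = (R⁻¹)^j{}_i{}^l{}_k`. -/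
def AntirealTypeI (n : ℕ) (R : Fin n → Fin n → Fin n → Fin n → ℂ) : Prop :=
  IsUnit (toMat n R) ∧ ∀ i j k l, conj (R i j k l) = invEntry n R j i l k

/-- `R` is of real type II w.r.t. the involution `σ`:
`conj (R^i{}_j{}^k{}_l) = R^{σk}{}_{σl}{}^{σi}{}_{σj}`. -/
def RealTypeII (n : ℕ) (R : Fin n → Fin n → Fin n → Fin n → ℂ)
    (σ : Fin n → Fin n) : Prop :=
  ∀ i j k l, conj (R i j k l) = R (σ k) (σ l) (σ i) (σ j)

/-- `R` is of antireal type II w.r.t. the involution `σ`: `R` invertible and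
`conj (R^i{}_j{}^k{}_l) = (R⁻¹)^{σi}{}_{σj}{}^{σk}{}_{σl}`. -/
def AntirealTypeII (n : ℕ) (R : Fin n → Fin n → Fin n → Fin n → ℂ)
    (σ : Fin n → Fin n) : Prop :=
  IsUnit (toMat n R) ∧
    ∀ i j k l, conj (R i j k l) = invEntry n R (σ i) (σ j) (σ k) (σ l)

/-- The metric `η` (entries `η^{ij} = η i j`) is `R`-covariant:
`Σ η^{ia} η^{jb} R^k{}_a{}^l{}_b = Σ R^i{}_a{}^j{}_b η^{ak} η^{bl}`. -/
def MetricCovariant (n : ℕ) (R : Fin n → Fin n → Fin n → Fin n → ℂ)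
    (η : Matrix (Fin n) (Fin n) ℂ) : Prop :=
  ∀ i j k l, (∑ a : Fin n, ∑ b : Fin n, η i a * η j b * R k a l b) =
    ∑ a : Fin n, ∑ b : Fin n, R i a j b * η a k * η b l

/-- The metric `η` is real: `conj (η^{ij}) = η_{ji}`, where the lower-index entries
`η_{ij}` are those of the transposed inverse, i.e. `η_{ji} = (η⁻¹) i j`. -/
def MetricReal (n : ℕ) (η : Matrix (Fin n) (Fin n) ℂ) : Prop :=
  ∀ i j, conj (η i j) = η⁻¹ i j

/-- The relations `x_i x_j = Σ_{a,b} R'^a{}_i{}^b{}_j x_b x_a` of the braided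
covector algebra, as a relation on the free algebra. -/
inductive CovRel (n : ℕ) (R' : Fin n → Fin n → Fin n → Fin n → ℂ) :
    FreeAlgebra ℂ (Fin n) → FreeAlgebra ℂ (Fin n) → Prop
  | rel (i j : Fin n) :
      CovRel n R' (FreeAlgebra.ι ℂ i * FreeAlgebra.ι ℂ j)
        (∑ a : Fin n, ∑ b : Fin n,
          R' a i b j • (FreeAlgebra.ι ℂ b * FreeAlgebra.ι ℂ a))

/-- The braided covector algebra `V̌(R',R)`: the free algebra on `x_1,…,x_n` modulo
the two-sided ideal generated by `x_i x_j − Σ R'^a{}_i{}^b{}_j x_b x_a`. -/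
abbrev CovAlg (n : ℕ) (R' : Fin n → Fin n → Fin n → Fin n → ℂ) :=
  RingQuot (CovRel n R')

/-- The generator `x_i` of the braided covector algebra. -/
def xg (n : ℕ) (R' : Fin n → Fin n → Fin n → Fin n → ℂ) (i : Fin n) :
    CovAlg n R' :=
  RingQuot.mkAlgHom ℂ (CovRel n R') (FreeAlgebra.ι ℂ i)

/-- The relations `v^i v^j = Σ_{a,b} R'^i{}_a{}^j{}_b v^b v^a` of the braided
vector algebra, as a relation on the free algebra. -/
inductive VecRel (n : ℕ) (R' : Fin n → Fin n → Fin n → Fin n → ℂ) :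
    FreeAlgebra ℂ (Fin n) → FreeAlgebra ℂ (Fin n) → Prop
  | rel (i j : Fin n) :
      VecRel n R' (FreeAlgebra.ι ℂ i * FreeAlgebra.ι ℂ j)
        (∑ a : Fin n, ∑ b : Fin n,
          R' i a j b • (FreeAlgebra.ι ℂ b * FreeAlgebra.ι ℂ a))

/-- The braided vector algebra `V(R',R)`: the free algebra on `v^1,…,v^n` modulo
the two-sided ideal generated by `v^i v^j − Σ R'^i{}_a{}^j{}_b v^b v^a`. -/
abbrev VecAlg (n : ℕ) (R' : Fin n → Fin n → Fin n → Fin n → ℂ) :=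
  RingQuot (VecRel n R')

/-- The generator `v^i` of the braided vector algebra. -/
def vg (n : ℕ) (R' : Fin n → Fin n → Fin n → Fin n → ℂ) (i : Fin n) :
    VecAlg n R' :=
  RingQuot.mkAlgHom ℂ (VecRel n R') (FreeAlgebra.ι ℂ i)

/-- The relations of the braided tensor square of the braided covector algebra:
generators `x_i = ι (inl i)`, `y_i = ι (inr i)`, with `x`- and `y`-relations from
`R'` and cross relations `y_i x_j = Σ_{a,b} R^a{}_i{}^b{}_j x_b y_a`. -/
inductive SqRel (n : ℕ) (R' R : Fin n → Fin n → Fin n → Fin n → ℂ) :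
    FreeAlgebra ℂ (Fin n ⊕ Fin n) → FreeAlgebra ℂ (Fin n ⊕ Fin n) → Prop
  | xx (i j : Fin n) :
      SqRel n R' R (FreeAlgebra.ι ℂ (Sum.inl i) * FreeAlgebra.ι ℂ (Sum.inl j))
        (∑ a : Fin n, ∑ b : Fin n, R' a i b j •
          (FreeAlgebra.ι ℂ (Sum.inl b) * FreeAlgebra.ι ℂ (Sum.inl a)))
  | yy (i j : Fin n) :
      SqRel n R' R (FreeAlgebra.ι ℂ (Sum.inr i) * FreeAlgebra.ι ℂ (Sum.inr j))
        (∑ a : Fin n, ∑ b : Fin n, R' a i b j •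
          (FreeAlgebra.ι ℂ (Sum.inr b) * FreeAlgebra.ι ℂ (Sum.inr a)))
  | yx (i j : Fin n) :
      SqRel n R' R (FreeAlgebra.ι ℂ (Sum.inr i) * FreeAlgebra.ι ℂ (Sum.inl j))
        (∑ a : Fin n, ∑ b : Fin n, R a i b j •
          (FreeAlgebra.ι ℂ (Sum.inl b) * FreeAlgebra.ι ℂ (Sum.inr a)))

/-- The braided tensor square `B` of the braided covector algebra. -/
abbrev SqAlg (n : ℕ) (R' R : Fin n → Fin n → Fin n → Fin n → ℂ) :=
  RingQuot (SqRel n R' R)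

/-- The generator `x_i` of the braided tensor square. -/
def Xg (n : ℕ) (R' R : Fin n → Fin n → Fin n → Fin n → ℂ) (i : Fin n) :
    SqAlg n R' R :=
  RingQuot.mkAlgHom ℂ (SqRel n R' R) (FreeAlgebra.ι ℂ (Sum.inl i))

/-- The generator `y_i` of the braided tensor square. -/
def Yg (n : ℕ) (R' R : Fin n → Fin n → Fin n → Fin n → ℂ) (i : Fin n) :
    SqAlg n R' R :=
  RingQuot.mkAlgHom ℂ (SqRel n R' R) (FreeAlgebra.ι ℂ (Sum.inr i))

/-- A conjugate-linear, antimultiplicative, unital map between ℂ-algebras. -/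
def IsConjLinearAntiHom {A B : Type*} [Semiring A] [Algebra ℂ A]
    [Semiring B] [Algebra ℂ B] (f : A → B) : Prop :=
  (∀ a b : A, f (a + b) = f a + f b) ∧
  (∀ (c : ℂ) (a : A), f (c • a) = (starRingEnd ℂ) c • f a) ∧
  (∀ a b : A, f (a * b) = f b * f a) ∧
  f 1 = 1

/-- A star structure on a ℂ-algebra: a conjugate-linear, antimultiplicative,
unital, involutive map. -/
def IsStarStructure {A : Type*} [Semiring A] [Algebra ℂ A] (f : A → A) : Prop :=
  (∀ a b : A, f (a + b) = f a + f b) ∧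
  (∀ (c : ℂ) (a : A), f (c • a) = (starRingEnd ℂ) c • f a) ∧
  (∀ a b : A, f (a * b) = f b * f a) ∧
  f 1 = 1 ∧
  (∀ a : A, f (f a) = a)

namespace Stmt0Aux

open MulOpposite

/-- Type synonym carrying the conjugate `ℂ`-algebra structure. -/
def ConjA (B : Type) : Type := B

instance {B : Type} [Semiring B] : Semiring (ConjA B) := inferInstanceAs (Semiring B)

/-- The conjugated algebra map. -/
def conjRingHom (B : Type) [Semiring B] [Algebra ℂ B] : ℂ →+* ConjA B :=
  ((algebraMap ℂ B).comp (starRingEnd ℂ) : ℂ →+* B)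

noncomputable instance {B : Type} [Semiring B] [Algebra ℂ B] : Algebra ℂ (ConjA B) :=
  RingHom.toAlgebra' (conjRingHom B)
    (fun c x => Algebra.commutes (A := B) ((starRingEnd ℂ) c) x)

lemma conjA_smul {B : Type} [Semiring B] [Algebra ℂ B] (c : ℂ) (b : B) :
    (c • (show ConjA B from b) : B) = algebraMap ℂ B ((starRingEnd ℂ) c) * b :=
  RingHom.smul_toAlgebra' (conjRingHom B)
    (fun c x => Algebra.commutes (A := B) ((starRingEnd ℂ) c) x) c b

lemma conjA_algebraMap_op {B : Type} [Semiring B] [Algebra ℂ B] (c : ℂ) :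
    algebraMap ℂ (ConjA (Bᵐᵒᵖ)) c
      = (op (algebraMap ℂ B ((starRingEnd ℂ) c)) : ConjA (Bᵐᵒᵖ)) := by
  show algebraMap ℂ (Bᵐᵒᵖ) ((starRingEnd ℂ) c) = _
  rw [MulOpposite.algebraMap_apply]

lemma op_sum {B : Type} [AddCommMonoid B] {α : Type} (s : Finset α) (f : α → B) :
    ∑ x ∈ s, (op (f x) : Bᵐᵒᵖ) = op (∑ x ∈ s, f x) := by
  simpa using (map_sum (opAddEquiv (α := B)) f s).symm

lemma relq (n : ℕ) (R' : Fin n → Fin n → Fin n → Fin n → ℂ) (i j : Fin n) :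
    xg n R' i * xg n R' j =
      ∑ a : Fin n, ∑ b : Fin n, R' a i b j • (xg n R' b * xg n R' a) := by
  have h := RingQuot.mkAlgHom_rel ℂ (CovRel.rel (n := n) (R' := R') i j)
  simpa only [xg, map_mul, map_sum, map_smul] using h

lemma relq' (n : ℕ) (R' : Fin n → Fin n → Fin n → Fin n → ℂ) (a b : Fin n) :
    xg n R' a * xg n R' b =
      ∑ q : Fin n × Fin n, toMat n R' q (a, b) • (xg n R' q.2 * xg n R' q.1) := by
  rw [Fintype.sum_prod_type]
  exact relq n R' a b

lemma keyInv (n : ℕ) (R' : Fin n → Fin n → Fin n → Fin n → ℂ)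
    (hu : IsUnit (toMat n R')) (I J : Fin n) :
    ∑ a : Fin n, ∑ b : Fin n, invEntry n R' a I b J • (xg n R' a * xg n R' b) =
      xg n R' J * xg n R' I := by
  have hdet : IsUnit (toMat n R').det := (Matrix.isUnit_iff_isUnit_det _).mp hu
  have h1 : toMat n R' * (toMat n R')⁻¹ = 1 := Matrix.mul_nonsing_inv _ hdet
  calc ∑ a : Fin n, ∑ b : Fin n, invEntry n R' a I b J • (xg n R' a * xg n R' b)
      = ∑ p : Fin n × Fin n, (toMat n R')⁻¹ p (I, J) • (xg n R' p.1 * xg n R' p.2) := by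
        rw [Fintype.sum_prod_type]; rfl
    _ = ∑ p : Fin n × Fin n, ∑ q : Fin n × Fin n,
          (toMat n R' q p * (toMat n R')⁻¹ p (I, J)) • (xg n R' q.2 * xg n R' q.1) := by
        refine Finset.sum_congr rfl fun p _ => ?_
        rw [relq' n R' p.1 p.2, Finset.smul_sum]
        refine Finset.sum_congr rfl fun q _ => ?_
        rw [smul_smul, mul_comm]
    _ = ∑ q : Fin n × Fin n, ((toMat n R' * (toMat n R')⁻¹) q (I, J)) •
          (xg n R' q.2 * xg n R' q.1) := by
        rw [Finset.sum_comm]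
        refine Finset.sum_congr rfl fun q _ => ?_
        rw [Matrix.mul_apply, Finset.sum_smul]
    _ = xg n R' J * xg n R' I := by
        rw [h1]
        simp [Matrix.one_apply, ite_smul, Finset.sum_ite_eq]

lemma L1 {n : ℕ} {R' : Fin n → Fin n → Fin n → Fin n → ℂ} {σ : Fin n → Fin n}
    (hσ : Function.Involutive σ)
    (hR' : RealTypeII n R' σ ∨ AntirealTypeII n R' σ) (i j : Fin n) :
    xg n R' (σ j) * xg n R' (σ i) =
      ∑ a : Fin n, ∑ b : Fin n,
        (starRingEnd ℂ) (R' a i b j) • (xg n R' (σ a) * xg n R' (σ b)) := by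
  rcases hR' with h | ⟨hu, h⟩
  · have h' : ∀ i j k l, (starRingEnd ℂ) (R' i j k l) = R' (σ k) (σ l) (σ i) (σ j) := h
    simp only [h']
    rw [relq n R' (σ j) (σ i), Finset.sum_comm]
    refine Fintype.sum_equiv (hσ.toPerm σ) _ _ fun a => ?_
    refine Fintype.sum_equiv (hσ.toPerm σ) _ _ fun b => ?_
    simp only [Function.Involutive.coe_toPerm, hσ a, hσ b]
  · simp only [h]
    have e : ∑ a : Fin n, ∑ b : Fin n,
        invEntry n R' (σ a) (σ i) (σ b) (σ j) • (xg n R' (σ a) * xg n R' (σ b)) =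
        ∑ a : Fin n, ∑ b : Fin n,
        invEntry n R' a (σ i) b (σ j) • (xg n R' a * xg n R' b) := by
      refine Fintype.sum_equiv (hσ.toPerm σ) _ _ fun a => ?_
      refine Fintype.sum_equiv (hσ.toPerm σ) _ _ fun b => ?_
      simp only [Function.Involutive.coe_toPerm]
    rw [e, keyInv n R' hu (σ i) (σ j)]

/-- The conjugate-linear anti-multiplicative map, packaged as an algebra map into the
conjugate algebra of the multiplicative opposite. -/
noncomputable def fmap (n : ℕ) (R' : Fin n → Fin n → Fin n → Fin n → ℂ)
    (σ : Fin n → Fin n) :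
    FreeAlgebra ℂ (Fin n) →ₐ[ℂ] ConjA ((CovAlg n R')ᵐᵒᵖ) :=
  FreeAlgebra.lift ℂ fun i => (op (xg n R' (σ i)) : ConjA ((CovAlg n R')ᵐᵒᵖ))

lemma fmap_ι (n : ℕ) (R' : Fin n → Fin n → Fin n → Fin n → ℂ)
    (σ : Fin n → Fin n) (k : Fin n) :
    fmap n R' σ (FreeAlgebra.ι ℂ k) = (op (xg n R' (σ k)) : ConjA ((CovAlg n R')ᵐᵒᵖ)) := by
  show (FreeAlgebra.lift ℂ _) (FreeAlgebra.ι ℂ k) = _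
  exact FreeAlgebra.lift_ι_apply _ _

lemma fmap_compat {n : ℕ} {R' : Fin n → Fin n → Fin n → Fin n → ℂ}
    {σ : Fin n → Fin n} (hσ : Function.Involutive σ)
    (hR' : RealTypeII n R' σ ∨ AntirealTypeII n R' σ) :
    ∀ ⦃w₁ w₂⦄, CovRel n R' w₁ w₂ → fmap n R' σ w₁ = fmap n R' σ w₂ := by
  intro w₁ w₂ h
  cases h with
  | rel i j =>
    have lhs : fmap n R' σ (FreeAlgebra.ι ℂ i * FreeAlgebra.ι ℂ j)
        = (op (xg n R' (σ j) * xg n R' (σ i)) : ConjA ((CovAlg n R')ᵐᵒᵖ)) := by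
      rw [map_mul, fmap_ι, fmap_ι]; rfl
    have rhs : fmap n R' σ (∑ a : Fin n, ∑ b : Fin n,
          R' a i b j • (FreeAlgebra.ι ℂ b * FreeAlgebra.ι ℂ a))
        = (op (∑ a : Fin n, ∑ b : Fin n,
            (starRingEnd ℂ) (R' a i b j) • (xg n R' (σ a) * xg n R' (σ b)))
            : ConjA ((CovAlg n R')ᵐᵒᵖ)) := by
      rw [map_sum, ← op_sum]
      refine Finset.sum_congr rfl fun a _ => ?_
      rw [map_sum, ← op_sum]
      refine Finset.sum_congr rfl fun b _ => ?_
      rw [Algebra.smul_def, map_mul, map_mul, fmap_ι, fmap_ι, AlgHom.commutes,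
        conjA_algebraMap_op]
      change (op (algebraMap ℂ (CovAlg n R') ((starRingEnd ℂ) (R' a i b j))) *
        (op (xg n R' (σ b)) * op (xg n R' (σ a))) : (CovAlg n R')ᵐᵒᵖ) =
        op ((starRingEnd ℂ) (R' a i b j) • (xg n R' (σ a) * xg n R' (σ b)))
      rw [← MulOpposite.op_mul, ← MulOpposite.op_mul,
        ← Algebra.commutes, ← Algebra.smul_def]
    rw [lhs, rhs]
    exact congrArg (fun z : CovAlg n R' => (op z : ConjA ((CovAlg n R')ᵐᵒᵖ)))
      (L1 hσ hR' i j)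

end Stmt0Aux

/-- if `R'` is of real or antireal type II w.r.t. an involution `σ`,
the braided covector algebra `V̌(R',R)` admits a unique star structure with
`x_i* = x_{σ(i)}`. -/
theorem stmt0 (n : ℕ) (hn : 1 ≤ n)
    (R R' : Fin n → Fin n → Fin n → Fin n → ℂ)
    (σ : Fin n → Fin n) (hσ : Function.Involutive σ)
    (hR' : RealTypeII n R' σ ∨ AntirealTypeII n R' σ) :
    ∃! f : CovAlg n R' → CovAlg n R',
      IsStarStructure f ∧ ∀ i : Fin n, f (xg n R' i) = xg n R' (σ i) := by
  classical
  open MulOpposite in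
  have compat := Stmt0Aux.fmap_compat hσ hR'
  let F : CovAlg n R' →+* Stmt0Aux.ConjA ((CovAlg n R')ᵐᵒᵖ) :=
    RingQuot.lift ⟨(Stmt0Aux.fmap n R' σ).toRingHom, compat⟩
  let f : CovAlg n R' → CovAlg n R' := fun a => unop (F a : (CovAlg n R')ᵐᵒᵖ)
  have hmk : ∀ w : FreeAlgebra ℂ (Fin n),
      f (RingQuot.mkAlgHom ℂ (CovRel n R') w)
        = unop (Stmt0Aux.fmap n R' σ w : (CovAlg n R')ᵐᵒᵖ) := by
    intro w
    have h1 : RingQuot.mkAlgHom ℂ (CovRel n R') w = RingQuot.mkRingHom (CovRel n R') w := by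
      rw [← RingQuot.mkAlgHom_coe ℂ]; rfl
    have h2 := RingQuot.lift_mkRingHom_apply (Stmt0Aux.fmap n R' σ).toRingHom compat w
    simp only [f, F, h1, h2]
    rfl
  have hx : ∀ k, f (xg n R' k) = xg n R' (σ k) := by
    intro k; rw [xg, hmk, Stmt0Aux.fmap_ι]; rfl
  have hadd : ∀ a b, f (a + b) = f a + f b := by
    intro a b; simp only [f, map_add]; rfl
  have hmul : ∀ a b, f (a * b) = f b * f a := by
    intro a b; simp only [f, map_mul]; rfl
  have hone : f 1 = 1 := by simp only [f, map_one]; rfl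
  have halg : ∀ c : ℂ, f (algebraMap ℂ (CovAlg n R') c)
      = algebraMap ℂ (CovAlg n R') ((starRingEnd ℂ) c) := by
    intro c
    have h1 : algebraMap ℂ (CovAlg n R') c
        = RingQuot.mkAlgHom ℂ (CovRel n R') (algebraMap ℂ (FreeAlgebra ℂ (Fin n)) c) :=
      (AlgHom.commutes _ _).symm
    rw [h1, hmk, AlgHom.commutes, Stmt0Aux.conjA_algebraMap_op, MulOpposite.unop_op]
  have hsmul : ∀ (c : ℂ) (a : CovAlg n R'), f (c • a) = (starRingEnd ℂ) c • f a := by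
    intro c a
    rw [Algebra.smul_def, hmul, halg, ← Algebra.commutes, ← Algebra.smul_def]
  have hinv : ∀ a, f (f a) = a := by
    intro a
    obtain ⟨w, rfl⟩ := RingQuot.mkAlgHom_surjective ℂ (CovRel n R') a
    induction w using FreeAlgebra.induction with
    | grade0 c =>
        rw [AlgHom.commutes, halg, halg]
        simp
    | grade1 k =>
        have : RingQuot.mkAlgHom ℂ (CovRel n R') (FreeAlgebra.ι ℂ k) = xg n R' k := rfl
        rw [this, hx, hx, hσ k]
    | mul a b ha hb => rw [map_mul, hmul, hmul, ha, hb]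
    | add a b ha hb => rw [map_add, hadd, hadd, ha, hb]
  refine ⟨f, ⟨⟨hadd, hsmul, hmul, hone, hinv⟩, hx⟩, ?_⟩
  rintro g ⟨⟨gadd, gsmul, gmul, gone, -⟩, gx⟩
  funext a
  obtain ⟨w, rfl⟩ := RingQuot.mkAlgHom_surjective ℂ (CovRel n R') a
  induction w using FreeAlgebra.induction with
  | grade0 c =>
      have galg : g (algebraMap ℂ (CovAlg n R') c)
          = algebraMap ℂ (CovAlg n R') ((starRingEnd ℂ) c) := by
        rw [Algebra.algebraMap_eq_smul_one, gsmul, gone, ← Algebra.algebraMap_eq_smul_one]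
      rw [AlgHom.commutes, galg, halg]
  | grade1 k =>
      have : RingQuot.mkAlgHom ℂ (CovRel n R') (FreeAlgebra.ι ℂ k) = xg n R' k := rfl
      rw [this, gx, hx]
  | mul a b ha hb => rw [map_mul, gmul, hmul, ha, hb]
  | add a b ha hb => rw [map_add, gadd, hadd, ha, hb]
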